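/- Let z ∈ ℂ with 0 < Re z < 1 and let θ ∈ {π/4, -3π/4}. Then there exist real R > 0 and C > 0 such that for every r ≥ R the function t ↦ f_r(t·exp(iθ)) is integrable on [r, ∞) and ‖∫_r^∞ f_r(t·exp(iθ)) dt‖ ≤ C·r^(Re z - 1). -/

import Mathlib

open MeasureTheory

/-- The right integrand `f_r(w) = w^(z-1)·exp(πi w²)/(exp(πi w) - exp(-πi w))`. -/
noncomputable def fr (z w : ℂ) : ℂ :=
  w ^ (z - 1) * Complex.exp (Real.pi * Complex.I * w ^ 2) /
    (Complex.exp (Real.pi * Complex.I * w) - Complex.exp (-(Real.pi * Complex.I) * w))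

lemma norm_exp_sub_exp_neg_ge (b : ℂ) (h : 2 ≤ |b.re|) :
    1 ≤ ‖Complex.exp b - Complex.exp (-b)‖ := by
  have key : ∀ c : ℂ, 2 ≤ c.re → 1 ≤ ‖Complex.exp c - Complex.exp (-c)‖ := by
    intro c hc
    have h1 : Real.exp 2 ≤ ‖Complex.exp c‖ := by
      rw [Complex.norm_exp]
      exact Real.exp_le_exp.2 hc
    have h2 : ‖Complex.exp (-c)‖ ≤ 1 := by
      rw [Complex.norm_exp, Complex.neg_re]
      exact Real.exp_le_one_iff.2 (by linarith)
    have h3 := norm_sub_norm_le (Complex.exp c) (Complex.exp (-c))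
    have h4 : (3:ℝ) ≤ Real.exp 2 := by nlinarith [Real.add_one_le_exp 2]
    linarith
  rcases le_or_gt 0 b.re with hb | hb
  · exact key b (by rwa [abs_of_nonneg hb] at h)
  · have := key (-b) (by rw [Complex.neg_re]; rwa [abs_of_neg hb] at h)
    rw [neg_neg] at this
    rwa [norm_sub_rev]

/-- Finiteness of the far parts of the right contour (paper's Lemma 2.2): along the
rays at angles `π/4` and `-3π/4`, the tail integrals of `f_r` exist and are bounded
by `C·r^(Re z - 1)`. -/
theorem fr_tail_integral_bound (z : ℂ) (h0 : 0 < z.re) (h1 : z.re < 1)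
    (θ : ℝ) (hθ : θ = Real.pi / 4 ∨ θ = -(3 * Real.pi / 4)) :
    ∃ R > (0 : ℝ), ∃ C > (0 : ℝ), ∀ r : ℝ, R ≤ r →
      IntegrableOn (fun t : ℝ => fr z (t * Complex.exp (θ * Complex.I))) (Set.Ici r) ∧
      ‖∫ t in Set.Ici r, fr z (t * Complex.exp (θ * Complex.I))‖ ≤ C * r ^ (z.re - 1) := by
  set E : ℂ := Complex.exp (θ * Complex.I) with hE
  -- trigonometric facts
  have htrig : Real.cos (2*θ) = 0 ∧ Real.sin (2*θ) = 1 := by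
    rcases hθ with h | h
    · rw [h, show 2 * (Real.pi/4) = Real.pi/2 by ring, Real.cos_pi_div_two, Real.sin_pi_div_two]
      exact ⟨rfl, rfl⟩
    · rw [h, show 2 * (-(3*Real.pi/4)) = Real.pi/2 - 2*Real.pi by ring,
        Real.cos_sub_two_pi, Real.cos_pi_div_two, Real.sin_sub_two_pi, Real.sin_pi_div_two]
      exact ⟨rfl, rfl⟩
  have hsin : |Real.sin θ| = Real.sqrt 2 / 2 := by
    rcases hθ with h | h
    · rw [h, Real.sin_pi_div_four, abs_of_nonneg (by positivity)]
    · rw [h, Real.sin_neg, show 3*Real.pi/4 = Real.pi - Real.pi/4 by ring, Real.sin_pi_sub,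
        Real.sin_pi_div_four, abs_neg, abs_of_nonneg (by positivity)]
  have hsin0 : Real.sin θ ≠ 0 := by
    intro h
    rw [h, abs_zero] at hsin
    have h2 : (0:ℝ) < Real.sqrt 2 / 2 := by positivity
    linarith
  have hE2 : E ^ 2 = Complex.I := by
    rw [hE, pow_two, ← Complex.exp_add]
    have : (θ:ℂ) * Complex.I + θ * Complex.I = ↑(2*θ) * Complex.I := by push_cast; ring
    rw [this, Complex.exp_mul_I, ← Complex.ofReal_cos, ← Complex.ofReal_sin, htrig.1, htrig.2]
    simp
  -- denominator lower bound
  have hden : ∀ t : ℝ, 1 ≤ t →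
      1 ≤ ‖Complex.exp (Real.pi * Complex.I * (↑t * E)) -
            Complex.exp (-(Real.pi * Complex.I) * (↑t * E))‖ := by
    intro t ht
    have hre : ((Real.pi : ℂ) * Complex.I * (↑t * E)).re = -(Real.pi * t * Real.sin θ) := by
      rw [hE]
      simp [Complex.mul_re, Complex.mul_im, Complex.exp_ofReal_mul_I_re,
        Complex.exp_ofReal_mul_I_im]
      ring
    have heq : -(Real.pi * Complex.I) * (↑t * E) = -((Real.pi : ℂ) * Complex.I * (↑t * E)) := by
      ring
    rw [heq]
    apply norm_exp_sub_exp_neg_ge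
    rw [hre, abs_neg, abs_mul, abs_mul, hsin,
      abs_of_nonneg Real.pi_pos.le, abs_of_nonneg (by linarith : (0:ℝ) ≤ t)]
    have hs : (1.4:ℝ) ≤ Real.sqrt 2 := by
      nlinarith [Real.sq_sqrt (show (0:ℝ) ≤ 2 by norm_num), Real.sqrt_nonneg 2]
    have hpt : (3:ℝ) ≤ Real.pi * t := by nlinarith [Real.pi_gt_three]
    nlinarith [hpt, hs]
  -- pointwise bound
  have hbound : ∀ t : ℝ, 1 ≤ t → ‖fr z (↑t * E)‖ ≤
      Real.exp (Real.pi * |z.im|) * t ^ (z.re - 1) * Real.exp (-Real.pi * t ^ 2) := by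
    intro t ht
    have ht0 : (0:ℝ) < t := by linarith
    have habsw : ‖(↑t * E)‖ = t := by
      rw [norm_mul, hE, Complex.norm_exp, Complex.norm_real, Real.norm_of_nonneg ht0.le]
      simp [Complex.mul_re]
    -- norm of the gaussian factor
    have hw2 : ((t:ℂ) * E) ^ 2 = (t:ℂ) ^ 2 * Complex.I := by rw [mul_pow, hE2]
    have hnum2 : ‖Complex.exp (Real.pi * Complex.I * (↑t * E) ^ 2)‖
        = Real.exp (-Real.pi * t ^ 2) := by
      have hkey : (Real.pi:ℂ) * Complex.I * ((t:ℂ) * E) ^ 2 = ((-Real.pi * t ^ 2 : ℝ) : ℂ) := by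
        rw [hw2]
        push_cast
        linear_combination ((Real.pi:ℂ) * (t:ℂ) ^ 2) * Complex.I_sq
      rw [hkey, Complex.norm_exp, Complex.ofReal_re]
    -- norm of the cpow factor
    have hcpow : ‖(↑t * E) ^ (z - 1)‖ ≤ t ^ (z.re - 1) * Real.exp (Real.pi * |z.im|) := by
      have h := Complex.norm_cpow_le (↑t * E) (z - 1)
      rw [habsw] at h
      have hre : (z - 1).re = z.re - 1 := by simp
      have him : (z - 1).im = z.im := by simp
      rw [hre, him] at h
      have harg : -(Real.pi * |z.im|) ≤ Complex.arg (↑t * E) * z.im := by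
        have h1 : |Complex.arg (↑t * E) * z.im| ≤ Real.pi * |z.im| := by
          rw [abs_mul]
          exact mul_le_mul_of_nonneg_right (Complex.abs_arg_le_pi _) (abs_nonneg _)
        linarith [neg_abs_le (Complex.arg (↑t * E) * z.im)]
      calc ‖(↑t * E) ^ (z - 1)‖ ≤ t ^ (z.re - 1) / Real.exp (Complex.arg (↑t * E) * z.im) := h
        _ = t ^ (z.re - 1) * Real.exp (-(Complex.arg (↑t * E) * z.im)) := by
            rw [div_eq_mul_inv, ← Real.exp_neg]
        _ ≤ t ^ (z.re - 1) * Real.exp (Real.pi * |z.im|) := by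
            apply mul_le_mul_of_nonneg_left _ (Real.rpow_nonneg ht0.le _)
            exact Real.exp_le_exp.2 (by linarith)
    -- combine
    rw [fr, norm_div, norm_mul]
    calc ‖(↑t * E) ^ (z - 1)‖ * ‖Complex.exp (↑Real.pi * Complex.I * (↑t * E) ^ 2)‖ /
          ‖Complex.exp (↑Real.pi * Complex.I * (↑t * E)) -
            Complex.exp (-(↑Real.pi * Complex.I) * (↑t * E))‖
        ≤ ‖(↑t * E) ^ (z - 1)‖ * ‖Complex.exp (↑Real.pi * Complex.I * (↑t * E) ^ 2)‖ :=
          div_le_self (by positivity) (hden t ht)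
      _ = ‖(↑t * E) ^ (z - 1)‖ * Real.exp (-Real.pi * t ^ 2) := by rw [hnum2]
      _ ≤ (t ^ (z.re - 1) * Real.exp (Real.pi * |z.im|)) * Real.exp (-Real.pi * t ^ 2) := by
          exact mul_le_mul_of_nonneg_right hcpow (Real.exp_nonneg _)
      _ = Real.exp (Real.pi * |z.im|) * t ^ (z.re - 1) * Real.exp (-Real.pi * t ^ 2) := by ring
  refine ⟨1, one_pos, Real.exp (Real.pi * |z.im|), Real.exp_pos _, fun r hr => ?_⟩
  have hr0 : (0:ℝ) < r := by linarith
  -- continuity on Ici r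
  have hcont : ContinuousOn (fun t : ℝ => fr z (↑t * E)) (Set.Ici r) := by
    intro t ht
    have ht1 : (1:ℝ) ≤ t := le_trans hr ht
    have ht0 : (0:ℝ) < t := by linarith
    apply ContinuousAt.continuousWithinAt
    have hcw : ContinuousAt (fun s : ℝ => (↑s : ℂ) * E) t :=
      (Complex.continuous_ofReal.mul continuous_const).continuousAt
    have hslit : (↑t : ℂ) * E ∈ Complex.slitPlane := by
      rw [Complex.mem_slitPlane_iff]
      right
      have : ((t:ℂ) * E).im = t * Real.sin θ := by
        rw [hE]
        simp [Complex.mul_im, Complex.exp_ofReal_mul_I_im, Complex.exp_ofReal_mul_I_re]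
      rw [this]
      exact mul_ne_zero (ne_of_gt ht0) hsin0
    have hden' := hden t ht1
    apply ContinuousAt.div
    · exact (hcw.cpow continuousAt_const hslit).mul
        (Complex.continuous_exp.continuousAt.comp
          ((continuousAt_const.mul (hcw.pow 2))))
    · exact (Complex.continuous_exp.continuousAt.comp (continuousAt_const.mul hcw)).sub
        (Complex.continuous_exp.continuousAt.comp (continuousAt_const.mul hcw))
    · intro h
      rw [h] at hden'
      simp at hden'
      linarith
  -- dominating function
  set c : ℝ := Real.exp (Real.pi * |z.im|) * r ^ (z.re - 1) with hc
  have hg : IntegrableOn (fun t : ℝ => c * Real.exp (-Real.pi * t ^ 2)) (Set.Ici r) :=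
    ((integrable_exp_neg_mul_sq Real.pi_pos).const_mul c).integrableOn
  have hbnd : ∀ᵐ t : ℝ ∂(volume.restrict (Set.Ici r)),
      ‖fr z (↑t * E)‖ ≤ c * Real.exp (-Real.pi * t ^ 2) := by
    filter_upwards [ae_restrict_mem measurableSet_Ici] with t ht
    have ht1 : (1:ℝ) ≤ t := le_trans hr ht
    calc ‖fr z (↑t * E)‖
        ≤ Real.exp (Real.pi * |z.im|) * t ^ (z.re - 1) * Real.exp (-Real.pi * t ^ 2) :=
          hbound t ht1
      _ ≤ c * Real.exp (-Real.pi * t ^ 2) := by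
          rw [hc]
          gcongr Real.exp (Real.pi * |z.im|) * ?_ * Real.exp (-Real.pi * t ^ 2)
          exact Real.rpow_le_rpow_of_nonpos hr0 ht (by linarith)
  have hint : IntegrableOn (fun t : ℝ => fr z (↑t * E)) (Set.Ici r) :=
    Integrable.mono' hg (hcont.aestronglyMeasurable measurableSet_Ici) hbnd
  refine ⟨hint, ?_⟩
  have hI : ∫ t in Set.Ici r, Real.exp (-Real.pi * t ^ 2) ≤ 1 := by
    have h1 : ∫ t in Set.Ici r, Real.exp (-Real.pi * t ^ 2)
        ≤ ∫ t : ℝ, Real.exp (-Real.pi * t ^ 2) :=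
      setIntegral_le_integral (integrable_exp_neg_mul_sq Real.pi_pos)
        (Filter.Eventually.of_forall fun t => Real.exp_nonneg _)
    rwa [integral_gaussian, div_self Real.pi_pos.ne', Real.sqrt_one] at h1
  calc ‖∫ t in Set.Ici r, fr z (↑t * E)‖
      ≤ ∫ t in Set.Ici r, c * Real.exp (-Real.pi * t ^ 2) :=
        norm_integral_le_of_norm_le hg hbnd
    _ = c * ∫ t in Set.Ici r, Real.exp (-Real.pi * t ^ 2) := integral_const_mul c _
    _ ≤ c * 1 := by
        apply mul_le_mul_of_nonneg_left hI
        rw [hc]; positivity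
    _ = Real.exp (Real.pi * |z.im|) * r ^ (z.re - 1) := by rw [mul_one]
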